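/- Early-termination correctness: let X be a finite nonempty set, f, L : X → ℝ with L(x) ≤ f(x) for all x. Suppose the elements of X are processed in nondecreasing order of L, maintaining best = min of f over processed elements, and processing stops at the first element x with best < L(x). Then at termination, best = min_{x∈X} f(x). -/

import Mathlib

/-- Early-termination correctness: let `X` be a finite nonempty set and
`f, L : X → ℝ` with `L ≤ f` on `X`. Enumerate `X` as a duplicate-free list `l`
sorted in nondecreasing order of `L`, and process elements in this order,
maintaining `best = min of f over processed elements`. If processing stops
after `t ≥ 1` elements, either because the list is exhausted or because the
stopping condition `best < L x` holds at the next element `x`, then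
`best = min_{x ∈ X} f x`. -/
theorem early_termination_correct {α : Type*} [DecidableEq α]
    (X : Finset α) (hne : X.Nonempty) (f L : α → ℝ)
    (hLf : ∀ x ∈ X, L x ≤ f x)
    (l : List α) (hnd : l.Nodup) (hl : l.toFinset = X)
    (hsort : l.Pairwise (fun a b => L a ≤ L b))
    (t : ℕ) (htpos : 0 < t) (htle : t ≤ l.length)
    (hne' : ((l.take t).toFinset).Nonempty)
    (hstop : ∀ ht : t < l.length,
      ((l.take t).toFinset).inf' hne' f < L (l.get ⟨t, ht⟩)) :
    ((l.take t).toFinset).inf' hne' f = X.inf' hne f := by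
  subst hl
  apply le_antisymm
  · apply Finset.le_inf'
    intro y hy
    have hy' : y ∈ l := List.mem_toFinset.mp hy
    by_cases hyt : y ∈ l.take t
    · exact Finset.inf'_le f (List.mem_toFinset.mpr hyt)
    · have hyd : y ∈ l.drop t := by
        have h := (List.take_append_drop t l) ▸ hy'
        rcases List.mem_append.mp h with h | h
        · exact absurd h hyt
        · exact h
      rcases List.mem_iff_getElem.mp hyd with ⟨i, hi, hyeq⟩
      have hlen : (l.drop t).length = l.length - t := List.length_drop
      have ht : t < l.length := by omega
      have hgd : (l.drop t)[i] = l[t + i]'(by omega) := List.getElem_drop ..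
      have h2 : L (l.get ⟨t, ht⟩) ≤ L y := by
        rcases Nat.eq_zero_or_pos i with h0 | h0
        · subst h0
          simp only [List.get_eq_getElem]
          rw [← hyeq, hgd]
          simp
        · have := List.Pairwise.rel_get_of_lt hsort
            (a := ⟨t, ht⟩) (b := ⟨t + i, by omega⟩) (by simp [Fin.lt_def]; omega)
          simpa [← hyeq, hgd] using this
      have h1 := hstop ht
      have h3 := hLf y (List.mem_toFinset.mpr hy')
      linarith
  · apply Finset.le_inf'
    intro b hb
    exact Finset.inf'_le f (List.mem_toFinset.mpr
      (List.mem_of_mem_take (List.mem_toFinset.mp hb)))
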